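/- Let p be a prime, q a power of p, and let c(x) = (x^l - 1)^t v(x) be a polynomial over F_q with gcd(l,p)=1, 0 ≤ t ≤ p^e - 1, and (x^l - 1) ∤ v(x), regarded as a codeword of length l·p^e (i.e., reduced modulo x^{l p^e} - 1). If c has minimum Hamming weight in the repeated-root cyclic code it generates considerations, then w_H(c) = P_t · N_v, where P_t = ∏_i (t_i + 1) with t_i the digits of the base-p expansion of t, and N_v = w_H(v(x) mod (x^l - 1)). -/

import Mathlib

open Polynomial Finset

section RepeatedRootAux

variable {K : Type*} [Field K]



noncomputable def sect (m j : ℕ) (a : K[X]) : K[X] :=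
  ∑ k ∈ Finset.range (a.natDegree + 1), C (a.coeff (m * k + j)) * X ^ k

theorem sect_coeff {m : ℕ} (hm : 0 < m) (j : ℕ) (a : K[X]) (k : ℕ) :
    (sect m j a).coeff k = a.coeff (m * k + j) := by
  unfold sect
  rw [finset_sum_coeff]
  simp only [coeff_C_mul, coeff_X_pow, mul_ite, mul_one, mul_zero]
  rw [Finset.sum_ite_eq (Finset.range (a.natDegree + 1))]
  by_cases h : k ∈ Finset.range (a.natDegree + 1)
  · simp [h]
  · simp only [h, if_neg h]
    symm
    apply coeff_eq_zero_of_natDegree_lt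
    simp only [Finset.mem_range, not_lt] at h
    calc a.natDegree < k := h
    _ ≤ m * k := Nat.le_mul_of_pos_left k hm
    _ ≤ m * k + j := Nat.le_add_right _ _

theorem sect_mul {m : ℕ} {j : ℕ} (hj : j < m) (a : K[X]) :
    sect m j ((X ^ m - 1) * a) = (X - 1) * sect m j a := by
  have hm : 0 < m := lt_of_le_of_lt (Nat.zero_le _) hj
  ext k
  rw [sect_coeff hm]
  have h1 : (X ^ m - 1 : K[X]) * a = a * X ^ m - a := by ring
  have h2 : (X - 1 : K[X]) * sect m j a = sect m j a * X ^ 1 - sect m j a := by ring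
  rw [h1, h2, coeff_sub, coeff_sub, coeff_mul_X_pow', coeff_mul_X_pow',
    sect_coeff hm j a k, sect_coeff hm j a (k-1)]
  congr 1
  rcases Nat.eq_zero_or_pos k with rfl | hk
  · rw [if_neg (by omega), if_neg (by omega)]
  · have h3 : 1 ≤ k := hk
    have h4 : m ≤ m * k + j := by nlinarith
    rw [if_pos h3, if_pos h4]
    congr 1
    have hk1 : m * (k - 1) = m * k - m * 1 := by rw [Nat.mul_sub]
    have hk2 : m * 1 ≤ m * k := Nat.mul_le_mul_left m h3
    omega

theorem sect_pow_mul {m : ℕ} {j : ℕ} (hj : j < m) (s : ℕ) (a : K[X]) :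
    sect m j ((X ^ m - 1) ^ s * a) = (X - 1) ^ s * sect m j a := by
  induction s with
  | zero => simp
  | succ n ih =>
    have : ((X:K[X]) ^ m - 1) ^ (n+1) * a = (X ^ m - 1) * ((X ^ m - 1) ^ n * a) := by ring
    rw [this, sect_mul hj, ih]; ring

theorem card_support_eq_sum_sect {m : ℕ} (hm : 0 < m) (a : K[X]) :
    a.support.card = ∑ j ∈ Finset.range m, (sect m j a).support.card := by
  classical
  rw [Finset.card_eq_sum_card_fiberwise (f := fun n => n % m) (t := Finset.range m)
    (fun x _ => Finset.mem_range.2 (Nat.mod_lt _ hm))]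
  apply Finset.sum_congr rfl
  intro j hj
  have hj' : j < m := Finset.mem_range.1 hj
  symm
  apply Finset.card_bij (fun k _ => m * k + j)
  · intro k hk
    simp only [Polynomial.mem_support_iff] at hk
    rw [sect_coeff hm] at hk
    simp only [Finset.mem_filter, Polynomial.mem_support_iff]
    have : (m * k + j) % m = j := by rw [Nat.mul_add_mod]; exact Nat.mod_eq_of_lt hj'
    exact ⟨hk, this⟩
  · intro k1 h1 k2 h2 h
    have := Nat.add_right_cancel h
    exact Nat.eq_of_mul_eq_mul_left hm this
  · intro n hn
    simp only [Finset.mem_filter, Polynomial.mem_support_iff] at hn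
    have hd : m * (n / m) + j = n := by
      have := Nat.div_add_mod n m
      omega
    refine ⟨n / m, ?_, hd⟩
    simp only [Polynomial.mem_support_iff, sect_coeff hm, hd]
    exact hn.1

noncomputable def modR (m : ℕ) (a : K[X]) : K[X] :=
  ∑ j ∈ Finset.range m, C ((sect m j a).eval 1) * X ^ j

theorem sect_add {m : ℕ} (hm : 0 < m) (j : ℕ) (a b : K[X]) :
    sect m j (a + b) = sect m j a + sect m j b := by
  ext k; simp [sect_coeff hm, coeff_add]

theorem modR_add {m : ℕ} (hm : 0 < m) (a b : K[X]) :
    modR m (a + b) = modR m a + modR m b := by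
  unfold modR
  rw [← Finset.sum_add_distrib]
  exact Finset.sum_congr rfl fun j _ => by rw [sect_add hm, eval_add, C_add, add_mul]

theorem sect_monomial {m : ℕ} (hm : 0 < m) {j : ℕ} (hj : j < m) (cc : K) (n : ℕ) :
    sect m j (C cc * X ^ n) = if j = n % m then C cc * X ^ (n / m) else 0 := by
  by_cases h : j = n % m
  · subst h
    rw [if_pos rfl]
    ext k
    rw [sect_coeff hm, coeff_C_mul, coeff_C_mul, coeff_X_pow, coeff_X_pow]
    congr 1
    by_cases hk : k = n / m
    · subst hk
      have h1 := Nat.div_add_mod n m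
      rw [if_pos (by omega), if_pos rfl]
    · rw [if_neg, if_neg hk]
      intro he
      apply hk
      have h3 := Nat.div_add_mod n m
      have h4 : m * k = m * (n / m) := by omega
      exact Nat.eq_of_mul_eq_mul_left hm h4
  · rw [if_neg h]
    ext k
    rw [sect_coeff hm, coeff_C_mul, coeff_X_pow, coeff_zero]
    have h2 : ¬ (m * k + j = n) := by
      intro he
      apply h
      have hmod : (m * k + j) % m = j := by rw [Nat.mul_add_mod]; exact Nat.mod_eq_of_lt hj
      rw [he] at hmod
      omega
    rw [if_neg h2, mul_zero]

theorem modR_monomial {m : ℕ} (hm : 0 < m) (cc : K) (n : ℕ) :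
    modR m (C cc * X ^ n) = C cc * X ^ (n % m) := by
  unfold modR
  rw [Finset.sum_eq_single (n % m)]
  · rw [sect_monomial hm (Nat.mod_lt _ hm), if_pos rfl]
    simp
  · intro j hjr hjn
    rw [sect_monomial hm (Finset.mem_range.1 hjr), if_neg hjn]
    simp
  · intro h
    exact absurd (Finset.mem_range.2 (Nat.mod_lt _ hm)) h

theorem dvd_sub_modR {m : ℕ} (hm : 0 < m) (a : K[X]) :
    (X ^ m - 1 : K[X]) ∣ a - modR m a := by
  induction a using Polynomial.induction_on' with
  | add p q hp hq =>
    rw [modR_add hm]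
    have : p + q - (modR m p + modR m q) = (p - modR m p) + (q - modR m q) := by ring
    rw [this]
    exact dvd_add hp hq
  | monomial n cc =>
    rw [← C_mul_X_pow_eq_monomial, modR_monomial hm]
    have hnn : n % m + m * (n / m) = n := by
      have := Nat.div_add_mod n m; omega
    have h1 : C cc * X ^ n - C cc * X ^ (n % m) =
        C cc * X ^ (n % m) * ((X ^ m) ^ (n / m) - 1) := by
      rw [mul_sub, mul_one, mul_assoc, ← pow_mul, ← pow_add, hnn]
    rw [h1]
    exact Dvd.dvd.mul_left (by simpa using sub_dvd_pow_sub_pow (X ^ m : K[X]) 1 (n / m)) _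

theorem degree_modR_lt {m : ℕ} (hm : 0 < m) (a : K[X]) :
    (modR m a).degree < (m : ℕ) := by
  unfold modR
  apply lt_of_le_of_lt (degree_sum_le _ _)
  rw [Finset.sup_lt_iff (by exact_mod_cast WithBot.bot_lt_coe m)]
  intro j hj
  apply lt_of_le_of_lt (degree_C_mul_X_pow_le _ _)
  exact_mod_cast Finset.mem_range.1 hj

theorem modByMonic_eq_modR {m : ℕ} (hm : 0 < m) (a : K[X]) :
    a %ₘ (X ^ m - 1) = modR m a := by
  have hmon : Monic (X ^ m - 1 : K[X]) := by
    simpa using monic_X_pow_sub_C (1 : K) hm.ne'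
  have h0 : (a - modR m a) %ₘ (X ^ m - 1) = 0 :=
    (modByMonic_eq_zero_iff_dvd hmon).2 (dvd_sub_modR hm a)
  rw [sub_modByMonic] at h0
  have h1 : modR m a %ₘ (X ^ m - 1) = modR m a := by
    rw [modByMonic_eq_self_iff hmon]
    have : (X ^ m - 1 : K[X]).degree = m := by
      simpa using degree_X_pow_sub_C hm (1 : K)
    rw [this]
    exact degree_modR_lt hm a
  rw [h1] at h0
  exact sub_eq_zero.1 h0

theorem coeff_modR {m : ℕ} {j : ℕ} (hj : j < m) (a : K[X]) :
    (modR m a).coeff j = (sect m j a).eval 1 := by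
  unfold modR
  rw [finset_sum_coeff]
  simp only [coeff_C_mul, coeff_X_pow, mul_ite, mul_one, mul_zero]
  rw [Finset.sum_ite_eq (Finset.range m)]
  rw [if_pos (Finset.mem_range.2 hj)]

theorem coeff_modByMonic_sect {m : ℕ} {j : ℕ} (hj : j < m) (a : K[X]) :
    (a %ₘ (X ^ m - 1)).coeff j = (sect m j a).eval 1 := by
  rw [modByMonic_eq_modR (lt_of_le_of_lt (Nat.zero_le _) hj), coeff_modR hj]

theorem sect_ne_zero_of {m : ℕ} (hm : 0 < m) {j : ℕ} {a : K[X]}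
    (h : sect m j a ≠ 0) : ∃ k, a.coeff (m * k + j) ≠ 0 := by
  by_contra hc
  push_neg at hc
  exact h (by ext k; rw [sect_coeff hm, hc k, coeff_zero])

theorem card_modByMonic_le {m : ℕ} (hm : 0 < m) (a : K[X]) :
    (a %ₘ (X ^ m - 1)).support.card ≤ a.support.card := by
  classical
  rw [modByMonic_eq_modR hm]
  have hsub : (modR m a).support ⊆ a.support.image (· % m) := by
    intro j hjs
    have hjm : j < m := by
      by_contra hge
      push_neg at hge
      have : (modR m a).coeff j = 0 := by
        unfold modR
        rw [finset_sum_coeff]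
        apply Finset.sum_eq_zero
        intro i hi
        rw [coeff_C_mul, coeff_X_pow, if_neg, mul_zero]
        intro hji
        exact absurd (Finset.mem_range.1 hi) (by omega)
      exact (Polynomial.mem_support_iff.1 hjs) this
    rw [Polynomial.mem_support_iff, coeff_modR hjm] at hjs
    have hne : sect m j a ≠ 0 := fun h0 => hjs (by rw [h0, eval_zero])
    obtain ⟨k, hk⟩ := sect_ne_zero_of hm hne
    refine Finset.mem_image.2 ⟨m * k + j, Polynomial.mem_support_iff.2 hk, ?_⟩
    rw [Nat.mul_add_mod]
    exact Nat.mod_eq_of_lt hjm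
  calc (modR m a).support.card ≤ (a.support.image (· % m)).card := Finset.card_le_card hsub
  _ ≤ a.support.card := Finset.card_image_le

theorem card_support_expand_le {m : ℕ} (hm : 0 < m) (a : K[X]) :
    ((expand K m a).support.card) ≤ a.support.card := by
  classical
  have hsub : (expand K m a).support ⊆ a.support.image (m * ·) := by
    intro n hn
    rw [Polynomial.mem_support_iff, coeff_expand hm] at hn
    split_ifs at hn with h
    · exact Finset.mem_image.2 ⟨n / m, Polynomial.mem_support_iff.2 hn, Nat.mul_div_cancel' h⟩
    · exact absurd rfl hn
  calc _ ≤ (a.support.image (m * ·)).card := Finset.card_le_card hsub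
  _ ≤ _ := Finset.card_image_le

theorem card_support_pow_char_le (p : ℕ) [Fact p.Prime] [CharP K p] (a : K[X]) :
    (a ^ p).support.card ≤ a.support.card := by
  have hp : 0 < p := (Fact.out : p.Prime).pos
  rw [← Polynomial.map_frobenius_expand (p := p) a]
  calc ((expand K p a).map (frobenius K p)).support.card
      ≤ (expand K p a).support.card := Finset.card_le_card (support_map_subset _ _)
  _ ≤ a.support.card := card_support_expand_le hp a

theorem card_support_pow_char_pow_le (p : ℕ) [Fact p.Prime] [CharP K p] (e : ℕ) (a : K[X]) :
    (a ^ p ^ e).support.card ≤ a.support.card := by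
  induction e with
  | zero => simp
  | succ n ih =>
    have : a ^ p ^ (n + 1) = (a ^ p ^ n) ^ p := by rw [← pow_mul, pow_succ]
    rw [this]
    exact le_trans (card_support_pow_char_le p _) ih

theorem Pt_rec {p t : ℕ} (hp : 1 < p) (ht : 0 < t) :
    ((Nat.digits p t).map (· + 1)).prod
      = (t % p + 1) * ((Nat.digits p (t / p)).map (· + 1)).prod := by
  rw [Nat.digits_def' hp ht, List.map_cons, List.prod_cons]

theorem lemF (p : ℕ) [Fact p.Prime] [CharP K p] :
    ∀ t : ℕ, (((X : K[X]) - 1) ^ t).support.card ≤ ((Nat.digits p t).map (· + 1)).prod := by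
  intro t
  induction t using Nat.strong_induction_on with
  | _ t ih =>
    rcases Nat.eq_zero_or_pos t with rfl | ht
    · rw [pow_zero]
      calc _ ≤ (Finset.range ((1 : K[X]).natDegree + 1)).card :=
            Finset.card_le_card supp_subset_range_natDegree_succ
      _ ≤ _ := by rw [Finset.card_range, natDegree_one]; simp
    have hp : 1 < p := (Fact.out : p.Prime).one_lt
    have hsplit : ((X : K[X]) - 1) ^ t = ((X - 1) ^ (t % p)) * ((X - 1) ^ (t / p)) ^ p := by
      rw [← pow_mul, ← pow_add]
      congr 1
      have := Nat.mod_add_div' t p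
      omega
    rw [hsplit, Pt_rec hp ht]
    have h1 : (((X : K[X]) - 1) ^ (t % p)).support.card ≤ t % p + 1 := by
      have hd : (((X : K[X]) - 1) ^ (t % p)).natDegree ≤ t % p := by
        have : ((X : K[X]) - 1).natDegree = 1 := by
          simpa using natDegree_X_sub_C (1 : K)
        rw [natDegree_pow, this, mul_one]
      calc _ ≤ (Finset.range ((((X : K[X]) - 1) ^ (t % p)).natDegree + 1)).card :=
            Finset.card_le_card supp_subset_range_natDegree_succ
      _ = (((X : K[X]) - 1) ^ (t % p)).natDegree + 1 := Finset.card_range _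
      _ ≤ t % p + 1 := by omega
    have h2 : ((((X : K[X]) - 1) ^ (t / p)) ^ p).support.card
        ≤ ((Nat.digits p (t / p)).map (· + 1)).prod :=
      le_trans (card_support_pow_char_le p _) (ih (t / p) (Nat.div_lt_self ht hp))
    calc _ ≤ _ := card_support_mul_le
    _ ≤ (t % p + 1) * ((Nat.digits p (t / p)).map (· + 1)).prod := Nat.mul_le_mul h1 h2



theorem eval_one_zero_of_dvd {r : K[X]} {t0 : ℕ} (ht0 : 0 < t0)
    (h : ((X : K[X]) - 1) ^ t0 ∣ r) : r.eval 1 = 0 := by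
  obtain ⟨q, rfl⟩ := dvd_trans (dvd_pow_self ((X : K[X]) - 1) ht0.ne') h
  simp

theorem card_support_X_mul (h : K[X]) : ((X : K[X]) * h).support.card = h.support.card := by
  classical
  have hsupp : ((X : K[X]) * h).support = h.support.image (· + 1) := by
    ext n
    cases n with
    | zero =>
      simp only [Polynomial.mem_support_iff, Polynomial.mul_coeff_zero, coeff_X_zero, zero_mul,
        ne_eq, not_true_eq_false, false_iff, Finset.mem_image]
      rintro ⟨k, _, hk⟩
      omega
    | succ n =>
      simp only [Polynomial.mem_support_iff, coeff_X_mul, Finset.mem_image,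
        Polynomial.mem_support_iff]
      constructor
      · intro hn
        exact ⟨n, hn, rfl⟩
      · rintro ⟨k, hk, hkn⟩
        have : k = n := by omega
        subst this
        exact hk
  rw [hsupp, Finset.card_image_of_injective _ (fun a b => by omega)]

theorem lemD (p : ℕ) [Fact p.Prime] [CharP K p] :
    ∀ N : ℕ, ∀ r : K[X], r.natDegree ≤ N → r ≠ 0 → r.natDegree < p →
      ∀ t0 : ℕ, ((X : K[X]) - 1) ^ t0 ∣ r → t0 + 1 ≤ r.support.card := by
  intro N
  induction N with
  | zero =>
    intro r hrN hr0 hrp t0 hdvd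
    rcases Nat.eq_zero_or_pos t0 with rfl | ht0
    · simpa using Finset.card_pos.2 (Polynomial.support_nonempty.2 hr0)
    · exfalso
      have h1 : r.eval 1 = 0 := eval_one_zero_of_dvd ht0 hdvd
      have h2 : r = C (r.coeff 0) := Polynomial.eq_C_of_natDegree_le_zero hrN
      rw [h2, eval_C] at h1
      exact hr0 (by rw [h2, h1, map_zero])
  | succ N ihN =>
    intro r hrN hr0 hrp t0 hdvd
    rcases Nat.eq_zero_or_pos t0 with rfl | ht0
    · simpa using Finset.card_pos.2 (Polynomial.support_nonempty.2 hr0)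
    obtain ⟨s, rfl⟩ : ∃ s, t0 = s + 1 := ⟨t0 - 1, by omega⟩
    have hev : r.eval 1 = 0 := eval_one_zero_of_dvd ht0 hdvd
    have hndeg : r.natDegree ≠ 0 := by
      intro hd0
      have h2 : r = C (r.coeff 0) := Polynomial.eq_C_of_natDegree_le_zero (le_of_eq hd0)
      rw [h2, eval_C] at hev
      exact hr0 (by rw [h2, hev, map_zero])
    by_cases h0 : r.coeff 0 = 0
    · -- r = X * h
      obtain ⟨h, rfl⟩ := X_dvd_iff.2 h0
      have hh0 : h ≠ 0 := fun hh => hr0 (by rw [hh, mul_zero])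
      have hXne : (X : K[X]) ≠ 0 := X_ne_zero
      have hdegXh : ((X : K[X]) * h).natDegree = h.natDegree + 1 := by
        rw [natDegree_mul hXne hh0, natDegree_X]
        omega
      have hcop : IsCoprime ((X : K[X]) - 1) X := ⟨-1, 1, by ring⟩
      have hdvdh : ((X : K[X]) - 1) ^ (s + 1) ∣ h :=
        (hcop.pow_left).dvd_of_dvd_mul_left hdvd
      rw [card_support_X_mul]
      exact ihN h (by omega) hh0 (by omega) (s + 1) hdvdh
    · -- use the derivative
      have hdvd' : ((X : K[X]) - 1) ^ s ∣ derivative r := by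
        obtain ⟨u, rfl⟩ := hdvd
        rw [derivative_mul, derivative_pow]
        have hder1 : derivative ((X : K[X]) - 1) = 1 := by
          rw [derivative_sub, derivative_X, derivative_one, sub_zero]
        rw [hder1]
        simp only [Nat.add_sub_cancel, mul_one]
        exact dvd_add (((dvd_refl _).mul_left _).mul_right _)
          ((pow_dvd_pow _ (Nat.le_succ s)).mul_right _)
      have hr'ne : derivative r ≠ 0 := by
        intro hd
        have hle : 1 ≤ r.natDegree := by omega
        have hco : r.coeff (r.natDegree - 1 + 1) * ((r.natDegree - 1 : ℕ) + 1 : K) = 0 := by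
          rw [← coeff_derivative, hd, coeff_zero]
        have hnn : r.natDegree - 1 + 1 = r.natDegree := by omega
        rw [hnn] at hco
        have hcast : ((r.natDegree - 1 : ℕ) + 1 : K) = ((r.natDegree : ℕ) : K) := by
          rw [← Nat.cast_add_one, hnn]
        rw [hcast] at hco
        have hne : ((r.natDegree : ℕ) : K) ≠ 0 := by
          rw [Ne, CharP.cast_eq_zero_iff K p]
          intro hdvdp
          have := Nat.le_of_dvd (by omega) hdvdp
          omega
        have : r.coeff r.natDegree = 0 := by
          rcases mul_eq_zero.1 hco with h | h
          · exact h
          · exact absurd h hne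
        exact (Polynomial.leadingCoeff_ne_zero.2 hr0) this
      have hdeg' : (derivative r).natDegree < r.natDegree := natDegree_derivative_lt hndeg
      have hsub : (derivative r).support.image (· + 1) ⊆ r.support.erase 0 := by
        intro n hn
        obtain ⟨k, hk, rfl⟩ := Finset.mem_image.1 hn
        rw [Polynomial.mem_support_iff, coeff_derivative] at hk
        have hck : r.coeff (k + 1) ≠ 0 := fun h => hk (by rw [h, zero_mul])
        exact Finset.mem_erase.2 ⟨by omega, Polynomial.mem_support_iff.2 hck⟩
      have hcard : (derivative r).support.card + 1 ≤ r.support.card := by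
        have h1 : (derivative r).support.card = ((derivative r).support.image (· + 1)).card :=
          (Finset.card_image_of_injective _ (fun a b => by omega)).symm
        have h2 : ((derivative r).support.image (· + 1)).card ≤ (r.support.erase 0).card :=
          Finset.card_le_card hsub
        have h3 : (r.support.erase 0).card = r.support.card - 1 :=
          Finset.card_erase_of_mem (Polynomial.mem_support_iff.2 h0)
        have h4 : 1 ≤ r.support.card := Finset.card_pos.2 (Polynomial.support_nonempty.2 hr0)
        omega
      have := ihN (derivative r) (by omega) hr'ne (by omega) s hdvd'
      omega

theorem X_one_sub_ne : ((X : K[X]) - 1) ≠ 0 := by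
  simpa using X_sub_C_ne_zero (1 : K)

theorem lemB (p : ℕ) [Fact p.Prime] [CharP K p] :
    ∀ t : ℕ, ∀ u : K[X], u.eval 1 ≠ 0 →
      ((Nat.digits p t).map (· + 1)).prod ≤ (((X : K[X]) - 1) ^ t * u).support.card := by
  intro t
  induction t using Nat.strong_induction_on with
  | _ t ih =>
    intro u hu
    have hp2 : 1 < p := (Fact.out : p.Prime).one_lt
    have hp0 : 0 < p := by omega
    rcases Nat.eq_zero_or_pos t with rfl | ht
    · have hu0 : ((X : K[X]) - 1) ^ 0 * u ≠ 0 := by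
        rw [pow_zero, one_mul]
        exact fun h => hu (by rw [h]; simp)
      simpa using Finset.card_pos.2 (Polynomial.support_nonempty.2 hu0)
    have hchar : CharP K[X] p := inferInstance
    have hXp : ((X : K[X]) - 1) ^ p = X ^ p - 1 := by
      rw [sub_pow_char]
      simp
    set t0 := t % p with ht0def
    set s := t / p with hsdef
    have ht0p : t0 < p := Nat.mod_lt _ hp0
    set g : K[X] := ((X : K[X]) - 1) ^ t0 * u with hgdef
    have hfact : ((X : K[X]) - 1) ^ t * u = ((X : K[X]) ^ p - 1) ^ s * g := by
      rw [hgdef, ← hXp, ← pow_mul, ← mul_assoc, ← pow_add]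
      congr 2
      rw [ht0def, hsdef]
      have h1 := Nat.div_add_mod t p
      have h2 := Nat.div_add_mod' t p
      omega
    have hmon : Monic ((X : K[X]) ^ p - 1) := by
      simpa using monic_X_pow_sub_C (1 : K) hp0.ne'
    set r : K[X] := g %ₘ ((X : K[X]) ^ p - 1) with hrdef
    have hgdvd : ((X : K[X]) - 1) ^ t0 ∣ g := dvd_mul_right _ u
    have hrdvd : ((X : K[X]) - 1) ^ t0 ∣ r := by
      have heq : r = g - ((X : K[X]) ^ p - 1) * (g /ₘ ((X : K[X]) ^ p - 1)) := by
        rw [hrdef, eq_sub_iff_add_eq, modByMonic_add_div g ((X : K[X]) ^ p - 1)]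
      rw [heq]
      refine dvd_sub hgdvd (Dvd.dvd.mul_right ?_ _)
      rw [← hXp]
      exact pow_dvd_pow _ ht0p.le
    have hrne : r ≠ 0 := by
      intro hr0
      have hdvdg : ((X : K[X]) ^ p - 1) ∣ g := (modByMonic_eq_zero_iff_dvd hmon).1 hr0
      rw [← hXp, hgdef] at hdvdg
      have hsplit : ((X : K[X]) - 1) ^ p = ((X : K[X]) - 1) ^ t0 * ((X : K[X]) - 1) ^ (p - t0) := by
        rw [← pow_add]
        congr 1
        omega
      rw [hsplit] at hdvdg
      have h2 : ((X : K[X]) - 1) ^ (p - t0) ∣ u :=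
        (mul_dvd_mul_iff_left (pow_ne_zero t0 X_one_sub_ne)).1 hdvdg
      exact hu (eval_one_zero_of_dvd (by omega) h2)
    have hrdeg : r.natDegree < p := by
      have h1 : r.degree < ((X : K[X]) ^ p - 1).degree := degree_modByMonic_lt g hmon
      have h2 : ((X : K[X]) ^ p - 1).degree = (p : ℕ) := by
        simpa using degree_X_pow_sub_C hp0 (1 : K)
      rw [h2] at h1
      exact (Polynomial.natDegree_lt_iff_degree_lt hrne).2 h1
    have hD : t0 + 1 ≤ r.support.card := lemD p r.natDegree r le_rfl hrne hrdeg t0 hrdvd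
    have hsuppr : r.support ⊆ Finset.range p := supp_subset_range hrdeg
    have hIH : ∀ j ∈ r.support,
        ((Nat.digits p s).map (· + 1)).prod ≤ (sect p j (((X : K[X]) ^ p - 1) ^ s * g)).support.card := by
      intro j hj
      have hjp : j < p := Finset.mem_range.1 (hsuppr hj)
      rw [sect_pow_mul hjp]
      apply ih s (Nat.div_lt_self ht hp2)
      rw [← coeff_modByMonic_sect hjp]
      exact Polynomial.mem_support_iff.1 hj
    calc ((Nat.digits p t).map (· + 1)).prod
        = (t0 + 1) * ((Nat.digits p s).map (· + 1)).prod := Pt_rec hp2 ht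
    _ ≤ r.support.card * ((Nat.digits p s).map (· + 1)).prod :=
        Nat.mul_le_mul_right _ hD
    _ = ∑ _j ∈ r.support, ((Nat.digits p s).map (· + 1)).prod := by
        rw [Finset.sum_const, smul_eq_mul]
    _ ≤ ∑ j ∈ r.support, (sect p j (((X : K[X]) ^ p - 1) ^ s * g)).support.card :=
        Finset.sum_le_sum hIH
    _ ≤ ∑ j ∈ Finset.range p, (sect p j (((X : K[X]) ^ p - 1) ^ s * g)).support.card :=
        Finset.sum_le_sum_of_subset hsuppr
    _ = (((X : K[X]) ^ p - 1) ^ s * g).support.card := (card_support_eq_sum_sect hp0 _).symm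
    _ = (((X : K[X]) - 1) ^ t * u).support.card := by rw [← hfact]

theorem lemE (p : ℕ) [Fact p.Prime] [CharP K p] {l : ℕ} (hl : 0 < l) (t : ℕ) (v : K[X]) :
    ((Nat.digits p t).map (· + 1)).prod * (v %ₘ ((X : K[X]) ^ l - 1)).support.card
      ≤ (((X : K[X]) ^ l - 1) ^ t * v).support.card := by
  set r : K[X] := v %ₘ ((X : K[X]) ^ l - 1) with hrdef
  by_cases hr : r = 0
  · rw [hr]
    simp
  have hmon : Monic ((X : K[X]) ^ l - 1) := by
    simpa using monic_X_pow_sub_C (1 : K) hl.ne'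
  have hrdeg : r.natDegree < l := by
    have h1 : r.degree < ((X : K[X]) ^ l - 1).degree := degree_modByMonic_lt v hmon
    have h2 : ((X : K[X]) ^ l - 1).degree = (l : ℕ) := by
      simpa using degree_X_pow_sub_C hl (1 : K)
    rw [h2] at h1
    exact (Polynomial.natDegree_lt_iff_degree_lt hr).2 h1
  have hsuppr : r.support ⊆ Finset.range l := supp_subset_range hrdeg
  calc ((Nat.digits p t).map (· + 1)).prod * r.support.card
      = ∑ _j ∈ r.support, ((Nat.digits p t).map (· + 1)).prod := by
        rw [Finset.sum_const, smul_eq_mul, Nat.mul_comm]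
  _ ≤ ∑ j ∈ r.support, (sect l j (((X : K[X]) ^ l - 1) ^ t * v)).support.card := by
      apply Finset.sum_le_sum
      intro j hj
      have hjl : j < l := Finset.mem_range.1 (hsuppr hj)
      rw [sect_pow_mul hjl]
      apply lemB p t
      rw [← coeff_modByMonic_sect hjl]
      exact Polynomial.mem_support_iff.1 hj
  _ ≤ ∑ j ∈ Finset.range l, (sect l j (((X : K[X]) ^ l - 1) ^ t * v)).support.card :=
      Finset.sum_le_sum_of_subset hsuppr
  _ = (((X : K[X]) ^ l - 1) ^ t * v).support.card := (card_support_eq_sum_sect hl _).symm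

end RepeatedRootAux

theorem stmt14 {F : Type*} [Field F] (p : ℕ) [Fact p.Prime] [CharP F p]
    (l e t : ℕ) (hl : 0 < l) (he : 0 < e) (hcop : Nat.gcd l p = 1)
    (ht : t ≤ p ^ e - 1) (v : Polynomial F)
    (hv : ¬((X : Polynomial F) ^ l - 1 ∣ v))
    (c : Polynomial F) (hc : c = ((X : Polynomial F) ^ l - 1) ^ t * v)
    (hcdeg : c.natDegree < l * p ^ e)
    (Code : Ideal (Polynomial F ⧸
      Ideal.span {(X : Polynomial F) ^ (l * p ^ e) - 1}))
    (hmem : Ideal.Quotient.mk _ c ∈ Code)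
    (hminwt : ∀ f : Polynomial F, f.natDegree < l * p ^ e → f ≠ 0 →
      Ideal.Quotient.mk (Ideal.span {(X : Polynomial F) ^ (l * p ^ e) - 1}) f ∈ Code →
      c.support.card ≤ f.support.card) :
    c.support.card =
      ((Nat.digits p t).map (· + 1)).prod * (v %ₘ ((X : Polynomial F) ^ l - 1)).support.card := by
  have hp2 : 1 < p := (Fact.out : p.Prime).one_lt
  have hpe : 0 < p ^ e := Nat.pow_pos (by omega)
  have htlt : t < p ^ e := by omega
  have hn0 : 0 < l * p ^ e := Nat.mul_pos hl hpe
  have hXl_ne : ((X : Polynomial F) ^ l - 1) ≠ 0 := by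
    intro h
    have hdd := degree_X_pow_sub_C hl (1 : F)
    rw [map_one, h] at hdd
    simp at hdd
  have hM : ((X : Polynomial F) ^ l - 1) ^ (p ^ e) = (X : Polynomial F) ^ (l * p ^ e) - 1 := by
    rw [sub_pow_char_pow, ← pow_mul, one_pow]
  have hMmon : Monic ((X : Polynomial F) ^ (l * p ^ e) - 1) := by
    simpa using monic_X_pow_sub_C (1 : F) hn0.ne'
  have hlmon : Monic ((X : Polynomial F) ^ l - 1) := by
    simpa using monic_X_pow_sub_C (1 : F) hl.ne'
  set vb : Polynomial F := v %ₘ ((X : Polynomial F) ^ l - 1) with hvbdef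
  have hvbne : vb ≠ 0 := by
    intro h0
    exact hv ((modByMonic_eq_zero_iff_dvd hlmon).1 h0)
  have hvbdeg : vb.natDegree < l := by
    have h1 : vb.degree < ((X : Polynomial F) ^ l - 1).degree := degree_modByMonic_lt v hlmon
    have h2 : ((X : Polynomial F) ^ l - 1).degree = (l : ℕ) := by
      simpa using degree_X_pow_sub_C hl (1 : F)
    rw [h2] at h1
    exact (Polynomial.natDegree_lt_iff_degree_lt hvbne).2 h1
  have hlK : ((l : ℕ) : F) ≠ 0 := by
    rw [Ne, CharP.cast_eq_zero_iff F p]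
    intro hdvd
    have h1 : p ∣ Nat.gcd l p := Nat.dvd_gcd hdvd dvd_rfl
    rw [hcop] at h1
    have := Nat.le_of_dvd Nat.one_pos h1
    omega
  have hsep : Squarefree ((X : Polynomial F) ^ l - 1) := by
    have h1 := (Polynomial.separable_X_pow_sub_C (1 : F) hlK one_ne_zero)
    rw [map_one] at h1
    exact h1.squarefree
  set F0 : Polynomial F := ((X : Polynomial F) ^ l - 1) ^ t * vb ^ (p ^ e) with hF0def
  set f : Polynomial F := F0 %ₘ ((X : Polynomial F) ^ (l * p ^ e) - 1) with hfdef
  have hfne : f ≠ 0 := by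
    intro h0
    have hdvd : ((X : Polynomial F) ^ (l * p ^ e) - 1) ∣ F0 :=
      (modByMonic_eq_zero_iff_dvd hMmon).1 h0
    rw [← hM, hF0def] at hdvd
    have hsplit : ((X : Polynomial F) ^ l - 1) ^ (p ^ e)
        = ((X : Polynomial F) ^ l - 1) ^ t * ((X : Polynomial F) ^ l - 1) ^ (p ^ e - t) := by
      rw [← pow_add]
      congr 1
      omega
    rw [hsplit] at hdvd
    have h2 : ((X : Polynomial F) ^ l - 1) ^ (p ^ e - t) ∣ vb ^ (p ^ e) :=
      (mul_dvd_mul_iff_left (pow_ne_zero t hXl_ne)).1 hdvd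
    have h3 : ((X : Polynomial F) ^ l - 1) ∣ vb ^ (p ^ e) :=
      dvd_trans (dvd_pow_self _ (by omega)) h2
    have h4 : ((X : Polynomial F) ^ l - 1) ∣ vb := (hsep.dvd_pow_iff_dvd hpe.ne').1 h3
    have h5 : vb = 0 := by
      apply Polynomial.eq_zero_of_dvd_of_natDegree_lt h4
      rw [show ((X : Polynomial F) ^ l - 1).natDegree = l from by
        simpa using natDegree_X_pow_sub_C (n := l) (r := (1 : F))]
      exact hvbdeg
    exact hvbne h5
  have hfdeg : f.natDegree < l * p ^ e := by
    have h1 : f.degree < ((X : Polynomial F) ^ (l * p ^ e) - 1).degree :=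
      degree_modByMonic_lt F0 hMmon
    have h2 : ((X : Polynomial F) ^ (l * p ^ e) - 1).degree = ((l * p ^ e : ℕ) : ℕ) := by
      simpa using degree_X_pow_sub_C hn0 (1 : F)
    rw [h2] at h1
    exact (Polynomial.natDegree_lt_iff_degree_lt hfne).2 h1
  have hmemf : Ideal.Quotient.mk (Ideal.span {(X : Polynomial F) ^ (l * p ^ e) - 1}) f ∈ Code := by
    have hmk0 : ∀ w : Polynomial F,
        Ideal.Quotient.mk (Ideal.span {(X : Polynomial F) ^ (l * p ^ e) - 1})
          (((X : Polynomial F) ^ (l * p ^ e) - 1) * w) = 0 := by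
      intro w
      rw [Ideal.Quotient.eq_zero_iff_mem]
      exact Ideal.mem_span_singleton.2 ⟨w, rfl⟩
    set h : Polynomial F := v /ₘ ((X : Polynomial F) ^ l - 1) with hhdef
    have hkey := modByMonic_add_div v ((X : Polynomial F) ^ l - 1)
    have hvsplit : v - vb = ((X : Polynomial F) ^ l - 1) * h := by
      rw [hvbdef, hhdef]
      linear_combination -hkey
    have hpow : v ^ (p ^ e) - vb ^ (p ^ e)
        = ((X : Polynomial F) ^ (l * p ^ e) - 1) * h ^ (p ^ e) := by
      rw [← sub_pow_char_pow, hvsplit, mul_pow, hM]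
    have hF0eq : F0 = c * v ^ (p ^ e - 1)
        - ((X : Polynomial F) ^ (l * p ^ e) - 1)
          * (((X : Polynomial F) ^ l - 1) ^ t * h ^ (p ^ e)) := by
      rw [hF0def, hc]
      have hv1 : v ^ (p ^ e) = v * v ^ (p ^ e - 1) := by
        rw [← pow_succ']
        congr 1
        omega
      have hvbp : vb ^ (p ^ e)
          = v ^ (p ^ e) - ((X : Polynomial F) ^ (l * p ^ e) - 1) * h ^ (p ^ e) := by
        rw [← hpow]; ring
      rw [hvbp, hv1]
      ring
    have hfF0 : Ideal.Quotient.mk (Ideal.span {(X : Polynomial F) ^ (l * p ^ e) - 1}) f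
        = Ideal.Quotient.mk (Ideal.span {(X : Polynomial F) ^ (l * p ^ e) - 1}) F0 := by
      have hrepr : f = F0 - ((X : Polynomial F) ^ (l * p ^ e) - 1)
          * (F0 /ₘ ((X : Polynomial F) ^ (l * p ^ e) - 1)) := by
        rw [hfdef, eq_sub_iff_add_eq, modByMonic_add_div F0 ((X : Polynomial F) ^ (l * p ^ e) - 1)]
      rw [hrepr, map_sub, hmk0, sub_zero]
    rw [hfF0, hF0eq, map_sub, hmk0, sub_zero, map_mul]
    exact Ideal.mul_mem_right _ Code hmem
  have hfcard : f.support.card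
      ≤ ((Nat.digits p t).map (· + 1)).prod * vb.support.card := by
    calc f.support.card ≤ F0.support.card := card_modByMonic_le hn0 F0
    _ ≤ (((X : Polynomial F) ^ l - 1) ^ t).support.card * (vb ^ (p ^ e)).support.card :=
        card_support_mul_le
    _ ≤ ((Nat.digits p t).map (· + 1)).prod * vb.support.card := by
        apply Nat.mul_le_mul
        · have hexp : ((X : Polynomial F) ^ l - 1) ^ t
              = expand F l (((X : Polynomial F) - 1) ^ t) := by
            rw [map_pow, map_sub, expand_X, map_one]
          rw [hexp]
          exact le_trans (card_support_expand_le hl _) (lemF p t)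
        · exact card_support_pow_char_pow_le p e vb
  apply le_antisymm
  · exact le_trans (hminwt f hfdeg hfne hmemf) hfcard
  · rw [hc]
    exact lemE p hl t v
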